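/- Let δ : 𝕋 × 𝕋 × ℝ → ℂ \ {0} be a continuous map satisfying δ(a, b, t) = δ(a, a·b, t + 1) for all a, b ∈ 𝕋 and all t ∈ ℝ, and let ρ : 𝕋 × 𝕋 → U(k) be a continuous group homomorphism such that det ρ(a, b) = δ(a, b, 1) for all a, b ∈ 𝕋. Then det ρ(1, b) = 1 for all b ∈ 𝕋; that is, the restriction of ρ to the subgroup {1} × 𝕋 ⊆ 𝕋 × 𝕋 takes values in SU(k). -/

import Mathlib

open Complex

/-- A continuous character of the circle admitting a global continuous logarithm is trivial. -/
private lemma circle_char_trivial (ψ : Circle → ℂ)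
    (hmul : ∀ a b : Circle, ψ (a * b) = ψ a * ψ b) (hψ1 : ψ 1 = 1)
    (h : Circle → ℂ) (hh : Continuous h)
    (hexp : ∀ a, Complex.exp (h a) = ψ a) : ∀ b, ψ b = 1 := by
  haveI : ConnectedSpace Circle :=
    Circle.leftInverse_exp_arg.surjective.connectedSpace Circle.exp.continuous
  have hψ0 : ∀ a, ψ a ≠ 0 := fun a => by rw [← hexp]; exact Complex.exp_ne_zero _
  set E : Circle × Circle → ℂ := fun p => h (p.1 * p.2) - h p.1 - h p.2 with hE
  have hEc : Continuous E :=
    ((hh.comp (continuous_fst.mul continuous_snd)).sub (hh.comp continuous_fst)).sub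
      (hh.comp continuous_snd)
  have hEint : ∀ p : Circle × Circle, ∃ m : ℤ, E p = (m : ℂ) * (2 * (Real.pi : ℂ) * Complex.I) := by
    intro p
    rw [← Complex.exp_eq_one_iff]
    show Complex.exp (h (p.1 * p.2) - h p.1 - h p.2) = 1
    rw [sub_sub, Complex.exp_sub, Complex.exp_add, hexp, hexp, hexp, hmul]
    exact div_self (mul_ne_zero (hψ0 _) (hψ0 _))
  have hconst : ∀ p : Circle × Circle, E p = E (1, 1) := by
    have hclopen : IsClopen {p : Circle × Circle | E p = E (1, 1)} := by
      constructor
      · exact isClosed_eq hEc continuous_const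
      · rw [isOpen_iff_mem_nhds]
        intro p hp
        have h2π : (0:ℝ) < 2 * Real.pi := by positivity
        have hnb : ∀ᶠ q in nhds p, ‖E q - E p‖ < 2 * Real.pi := by
          have := hEc.continuousAt (x := p)
          have := Metric.tendsto_nhds.mp this (2 * Real.pi) h2π
          filter_upwards [this] with q hq
          rwa [dist_eq_norm] at hq
        filter_upwards [hnb] with q hq
        obtain ⟨mq, hmq⟩ := hEint q
        obtain ⟨mp', hmp⟩ := hEint p
        have heq : E q = E p := by
          by_contra hne
          have hne' : mq ≠ mp' := fun hc => hne (by rw [hmq, hmp, hc])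
          have hsub : E q - E p = ((mq - mp' : ℤ) : ℂ) * (2 * (Real.pi : ℂ) * Complex.I) := by
            rw [hmq, hmp]; push_cast; ring
          rw [hsub, norm_mul] at hq
          have h1 : (1:ℝ) ≤ ‖((mq - mp' : ℤ) : ℂ)‖ := by
            rw [Complex.norm_intCast]
            exact_mod_cast Int.one_le_abs (sub_ne_zero.mpr hne')
          have h2 : ‖(2 * (Real.pi:ℂ) * Complex.I)‖ = 2 * Real.pi := by
            rw [norm_mul, norm_mul, Complex.norm_I, Complex.norm_real, Real.norm_eq_abs,
              _root_.abs_of_nonneg Real.pi_pos.le, mul_one]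
            norm_num
          rw [h2] at hq
          nlinarith
        show q ∈ {p : Circle × Circle | E p = E (1, 1)}
        rw [Set.mem_setOf_eq, heq]
        exact hp
    intro p
    have := hclopen.eq_univ ⟨(1,1), rfl⟩
    have hmem : p ∈ {p : Circle × Circle | E p = E (1, 1)} := this ▸ Set.mem_univ p
    exact hmem
  have hadd : ∀ a b : Circle, h (a * b) = h a + h b - h 1 := by
    intro a b
    have h1 := hconst (a, b)
    have h2 : E (1, 1) = -h 1 := by
      show h ((1 : Circle) * 1) - h 1 - h 1 = -h 1
      rw [one_mul]; ring
    rw [h2] at h1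
    have : h (a * b) - h a - h b = -h 1 := h1
    linear_combination this
  have hg : ∀ (b : Circle) (m : ℕ), h (b ^ m) - h 1 = m * (h b - h 1) := by
    intro b m
    induction m with
    | zero => simp
    | succ m ih =>
      rw [pow_succ, hadd]
      push_cast
      linear_combination ih
  obtain ⟨M, hM⟩ : ∃ M : ℝ, ∀ a : Circle, ‖h a - h 1‖ ≤ M := by
    obtain ⟨a0, -, ha0⟩ := isCompact_univ.exists_isMaxOn Set.univ_nonempty
      ((hh.sub continuous_const).norm.continuousOn)
    exact ⟨‖h a0 - h 1‖, fun a => isMaxOn_iff.mp ha0 _ (Set.mem_univ a)⟩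
  have hgz : ∀ b : Circle, h b = h 1 := by
    intro b
    by_contra hne
    have hne0 : h b - h 1 ≠ 0 := sub_ne_zero.mpr hne
    have hpos : 0 < ‖h b - h 1‖ := norm_pos_iff.mpr hne0
    obtain ⟨m, hm⟩ := exists_nat_gt (M / ‖h b - h 1‖)
    have h1' := hM (b ^ m)
    rw [hg b m, norm_mul, Complex.norm_natCast] at h1'
    rw [div_lt_iff₀ hpos] at hm
    linarith
  intro b
  rw [← hexp, hgz b, hexp, hψ1]

set_option maxHeartbeats 1000000 in
theorem stmt_5 (δ : C(Circle × Circle × ℝ, {z : ℂ // z ≠ 0}))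
    (hδ : ∀ (a b : Circle) (t : ℝ), δ (a, b, t) = δ (a, a * b, t + 1))
    (k : ℕ) (ρ : (Circle × Circle) →* Matrix.unitaryGroup (Fin k) ℂ)
    (hρ : Continuous ρ)
    (hdet : ∀ a b : Circle,
      (ρ (a, b) : Matrix (Fin k) (Fin k) ℂ).det = (δ (a, b, 1) : ℂ)) :
    ∀ b : Circle, (ρ (1, b) : Matrix (Fin k) (Fin k) ℂ).det = 1 := by
  classical
  set ψ : Circle → ℂ := fun b => (ρ (1, b) : Matrix (Fin k) (Fin k) ℂ).det with hψdef
  have hcoe_mul : ∀ x y : Circle × Circle,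
      ((ρ x * ρ y : Matrix.unitaryGroup (Fin k) ℂ) : Matrix (Fin k) (Fin k) ℂ)
        = (ρ x : Matrix (Fin k) (Fin k) ℂ) * (ρ y : Matrix (Fin k) (Fin k) ℂ) := fun x y =>
    Matrix.UnitaryGroup.mul_val _ _
  have hmul : ∀ a b : Circle, ψ (a * b) = ψ a * ψ b := by
    intro a b
    have hp : ((1, a * b) : Circle × Circle) = (1, a) * (1, b) := by
      simp [Prod.mk_mul_mk]
    show (ρ (1, a * b) : Matrix (Fin k) (Fin k) ℂ).det = _
    rw [hp, map_mul, hcoe_mul, Matrix.det_mul]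
  have hψ1 : ψ 1 = 1 := by
    show (ρ (1, 1) : Matrix (Fin k) (Fin k) ℂ).det = 1
    have : ((1, 1) : Circle × Circle) = 1 := rfl
    rw [this, map_one]
    rw [Matrix.UnitaryGroup.one_val, Matrix.det_one]
  -- the function f
  set f : Circle → ℝ → ℂ := fun a t => ((δ (a, 1, t) : {z : ℂ // z ≠ 0}) : ℂ) with hfdef
  have hf0 : ∀ a t, f a t ≠ 0 := fun a t => (δ (a, 1, t)).2
  have hfc : Continuous fun p : Circle × ℝ => f p.1 p.2 := by
    have hc : Continuous fun p : Circle × ℝ => δ (p.1, 1, p.2) :=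
      δ.continuous.comp (continuous_fst.prodMk (continuous_const.prodMk continuous_snd))
    exact continuous_subtype_val.comp hc
  have hkey : ∀ a : Circle, f a 0 = f a 1 * ψ a := by
    intro a
    have h0 : f a 0 = ((δ (a, a, 1) : {z : ℂ // z ≠ 0}) : ℂ) := by
      have hh := hδ a 1 0
      rw [mul_one, zero_add] at hh
      exact congrArg Subtype.val hh
    have h2 : ρ ((a, a) : Circle × Circle) = ρ (a, 1) * ρ (1, a) := by
      rw [← map_mul]
      congr 1
      simp [Prod.mk_mul_mk]
    have h3 : ((δ (a, a, 1) : {z : ℂ // z ≠ 0}) : ℂ)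
        = (ρ (a, 1) : Matrix (Fin k) (Fin k) ℂ).det * ψ a := by
      rw [← hdet a a, h2, hcoe_mul, Matrix.det_mul]
    rw [h0, h3, hdet a 1]
  -- compactness setup
  haveI : Nonempty (Set.Icc (0:ℝ) 1) := ⟨⟨0, by norm_num⟩⟩
  set F : Circle × Set.Icc (0:ℝ) 1 → ℂ := fun p => f p.1 (p.2 : ℝ) with hFdef
  have hFc : Continuous F :=
    hfc.comp (continuous_fst.prodMk (continuous_subtype_val.comp continuous_snd))
  obtain ⟨p0, -, hp0⟩ := isCompact_univ.exists_isMinOn (Set.univ_nonempty)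
    hFc.norm.continuousOn
  set m : ℝ := ‖F p0‖ with hmdef
  have hm : 0 < m := norm_pos_iff.mpr (hf0 _ _)
  have hUC := CompactSpace.uniformContinuous_of_continuous hFc
  replace hUC := (Metric.uniformContinuous_iff (f := F)).mp hUC
  obtain ⟨d, hd, hball⟩ := hUC m hm
  obtain ⟨n, hn⟩ := exists_nat_one_div_lt hd
  set N : ℕ := n + 1 with hNdef
  have hNpos : (0:ℝ) < (N : ℝ) := by positivity
  set tt : ℕ → ℝ := fun j => min ((j : ℝ) / N) 1 with httdef
  have httmem : ∀ j, tt j ∈ Set.Icc (0:ℝ) 1 := fun j =>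
    ⟨le_min (by positivity) zero_le_one, min_le_right _ _⟩
  have htt0 : tt 0 = 0 := by simp [httdef]
  have httN : tt N = 1 := by simp [httdef, div_self hNpos.ne']
  have hlow : ∀ (a : Circle) (j : ℕ), m ≤ ‖f a (tt j)‖ := by
    intro a j
    have hx := isMinOn_iff.mp hp0 (a, ⟨tt j, httmem j⟩) (Set.mem_univ _)
    simpa [hFdef] using hx
  have hclose : ∀ (a : Circle) (j : ℕ), ‖f a (tt j) - f a (tt (j + 1))‖ < m := by
    intro a j
    have hdist : dist (tt j) (tt (j + 1)) < d := by
      rw [Real.dist_eq]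
      have hb : |tt j - tt (j + 1)| ≤ 1 / (N : ℝ) := by
        refine (abs_min_sub_min_le_max _ _ _ _).trans ?_
        rw [sub_self, abs_zero, max_eq_left (abs_nonneg _)]
        have he : (j : ℝ) / N - ((j + 1 : ℕ) : ℝ) / N = -(1 / N) := by push_cast; ring
        rw [he, abs_neg]
        exact le_of_eq (_root_.abs_of_nonneg (by positivity))
      have hNn : (1 : ℝ) / (N : ℝ) < d := by
        have : ((N : ℝ)) = (n : ℝ) + 1 := by push_cast [hNdef]; ring
        rw [this]; exact hn
      linarith
    have := hball (a := (a, ⟨tt j, httmem j⟩)) (b := (a, ⟨tt (j + 1), httmem (j + 1)⟩)) ?_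
    · rwa [dist_eq_norm] at this
    · rw [Prod.dist_eq, Subtype.dist_eq]
      simp only [dist_self]
      rw [max_eq_right dist_nonneg]
      exact hdist
  set r : Circle → ℕ → ℂ := fun a j => f a (tt j) / f a (tt (j + 1)) with hrdef
  have hr0 : ∀ a j, r a j ≠ 0 := fun a j => div_ne_zero (hf0 _ _) (hf0 _ _)
  have hrre : ∀ a j, 0 < (r a j).re := by
    intro a j
    have hden : m ≤ ‖f a (tt (j + 1))‖ := hlow a (j + 1)
    have h1 : ‖r a j - 1‖ < 1 := by
      have hne := hf0 a (tt (j + 1))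
      have heq : r a j - 1 = (f a (tt j) - f a (tt (j + 1))) / f a (tt (j + 1)) := by
        show f a (tt j) / f a (tt (j + 1)) - 1 = _
        exact div_sub_one hne
      rw [heq, norm_div, div_lt_one (lt_of_lt_of_le hm hden)]
      exact lt_of_lt_of_le (hclose a j) hden
    have h2 : |(r a j).re - 1| < 1 := by
      have h3 := Complex.abs_re_le_norm (r a j - 1)
      rw [Complex.sub_re, Complex.one_re] at h3
      calc |(r a j).re - 1| ≤ ‖r a j - 1‖ := by exact h3
        _ < 1 := h1
    linarith [(abs_lt.mp h2).1]
  have htel : ∀ (a : Circle) (M : ℕ),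
      (∏ j ∈ Finset.range M, r a j) = f a (tt 0) / f a (tt M) := by
    intro a M
    induction M with
    | zero => simp [div_self (hf0 a (tt 0))]
    | succ M ih =>
      rw [Finset.prod_range_succ, ih]
      have h1 := hf0 a (tt M)
      have h2 := hf0 a (tt (M + 1))
      have h3 := hf0 a (tt 0)
      show f a (tt 0) / f a (tt M) * (f a (tt M) / f a (tt (M + 1)))
        = f a (tt 0) / f a (tt (M + 1))
      field_simp
  set h : Circle → ℂ := fun a => ∑ j ∈ Finset.range N, Complex.log (r a j) with hhdef
  have hhc : Continuous h := by
    apply continuous_finset_sum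
    intro j _
    rw [continuous_iff_continuousAt]
    intro a
    have hra : Continuous fun a : Circle => r a j := by
      exact (hfc.comp (continuous_id.prodMk continuous_const)).div
        (hfc.comp (continuous_id.prodMk continuous_const)) (fun a => hf0 _ _)
    have hcomp : ContinuousAt (Complex.log ∘ fun a : Circle => r a j) a :=
      ContinuousAt.comp (continuousAt_clog (Complex.mem_slitPlane_iff.mpr (Or.inl (hrre a j))))
        hra.continuousAt
    exact hcomp
  have hhexp : ∀ a, Complex.exp (h a) = ψ a := by
    intro a
    show Complex.exp (∑ j ∈ Finset.range N, Complex.log (r a j)) = ψ a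
    rw [Complex.exp_sum]
    rw [Finset.prod_congr rfl fun j _ => Complex.exp_log (hr0 a j)]
    rw [htel a N, htt0, httN, hkey a]
    exact mul_div_cancel_left₀ _ (hf0 a 1)
  exact circle_char_trivial ψ hmul hψ1 h hhc hhexp
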